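/- Let η be an n×n Hermitian positive-definite complex matrix and O an n×n complex matrix with η · O = Oᴴ · η. Then O is diagonalizable with real eigenvalues: there exist an invertible complex matrix U and a diagonal matrix D with real diagonal entries such that O = U · D · U⁻¹. -/

import Mathlib

open scoped ComplexOrder Matrix

/-- If `η` is Hermitian positive definite and `O` is quasi-Hermitian with respect
to `η` (i.e. `η * O = Oᴴ * η`), then `O` is diagonalizable with real eigenvalues: there are an
invertible matrix `U` and a diagonal matrix with real diagonal entries `d` such that
`O = U * diagonal d * U⁻¹`. -/
theorem stmt_2 (n : ℕ) (η O : Matrix (Fin n) (Fin n) ℂ)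
    (hη : η.PosDef) (hQH : η * O = Oᴴ * η) :
    ∃ (U : Matrix (Fin n) (Fin n) ℂ) (d : Fin n → ℝ),
      IsUnit U ∧ O = U * Matrix.diagonal (fun i => (d i : ℂ)) * U⁻¹ := by
  set S := (open MatrixOrder in CFC.sqrt η) with hSdef
  have hSS : S * S = η := (open MatrixOrder in CFC.sqrt_mul_sqrt_self η hη.posSemidef.nonneg)
  have hSH : S.IsHermitian := (open MatrixOrder in (Matrix.nonneg_iff_posSemidef.mp (CFC.sqrt_nonneg η)).1)
  -- S is invertible
  have hSdetUnit : IsUnit S.det := by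
    have hdet : S.det * S.det = η.det := by rw [← Matrix.det_mul, hSS]
    have hηdet : IsUnit η.det := hη.isUnit.map Matrix.detMonoidHom
    rw [← hdet] at hηdet
    exact isUnit_of_mul_isUnit_left hηdet
  have hS1 : S * S⁻¹ = 1 := Matrix.mul_nonsing_inv S hSdetUnit
  have hS2 : S⁻¹ * S = 1 := Matrix.nonsing_inv_mul S hSdetUnit
  -- the similar Hermitian matrix
  set H := S * O * S⁻¹ with hHdef
  have hHherm : H.IsHermitian := by
    have key : S * S * O = Oᴴ * (S * S) := by rw [hSS]; exact hQH
    have hSinvH : S⁻¹ᴴ = S⁻¹ := by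
      rw [Matrix.conjTranspose_nonsing_inv, hSH.eq]
    show Hᴴ = H
    calc Hᴴ = S⁻¹ᴴ * (Oᴴ * Sᴴ) := by
          simp [hHdef, Matrix.conjTranspose_mul, Matrix.mul_assoc]
      _ = S⁻¹ * (Oᴴ * S) := by rw [hSinvH, hSH.eq]
      _ = S⁻¹ * (Oᴴ * (S * S)) * S⁻¹ := by
          rw [Matrix.mul_assoc, Matrix.mul_assoc, Matrix.mul_assoc, hS1, Matrix.mul_one]
      _ = S⁻¹ * (S * S * O) * S⁻¹ := by rw [key]
      _ = H := by
          rw [hHdef]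
          simp only [Matrix.mul_assoc]
          rw [← Matrix.mul_assoc S⁻¹ S, hS2, Matrix.one_mul]
  -- spectral theorem
  obtain ⟨V, d, hV1, hV2, hHspec⟩ : ∃ (V : Matrix (Fin n) (Fin n) ℂ) (d : Fin n → ℝ),
      V * (star V) = 1 ∧ (star V) * V = 1 ∧
      H = V * Matrix.diagonal (fun i => ((d i : ℝ) : ℂ)) * star V := by
    refine ⟨hHherm.eigenvectorUnitary, hHherm.eigenvalues, ?_, ?_, ?_⟩
    · exact Matrix.mem_unitaryGroup_iff.mp hHherm.eigenvectorUnitary.2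
    · exact Matrix.mem_unitaryGroup_iff'.mp hHherm.eigenvectorUnitary.2
    · exact hHherm.spectral_theorem
  refine ⟨S⁻¹ * V, d, ?_, ?_⟩
  · have : IsUnit V := by
      rw [Matrix.isUnit_iff_isUnit_det]
      exact Matrix.isUnit_det_of_right_inverse hV1
    have hSinvUnit : IsUnit S⁻¹ := by
      rw [Matrix.isUnit_iff_isUnit_det]
      exact Matrix.isUnit_det_of_right_inverse hS2
    exact hSinvUnit.mul this
  · have hUinv : (S⁻¹ * V)⁻¹ = star V * S := by
      apply Matrix.inv_eq_right_inv
      calc S⁻¹ * V * (star V * S) = S⁻¹ * (V * star V) * S := by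
            simp [Matrix.mul_assoc]
        _ = 1 := by rw [hV1, Matrix.mul_one, hS2]
    rw [hUinv]
    have hO : O = S⁻¹ * H * S := by
      rw [hHdef, ← Matrix.mul_assoc, ← Matrix.mul_assoc, hS2, Matrix.one_mul,
        Matrix.mul_assoc, hS2, Matrix.mul_one]
    rw [hO, hHspec]
    simp [Matrix.mul_assoc]
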